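/- For λ ∈ [−1,0), r ∈ (0, e^{1/(2λ(1−λ))}), 0 < |α| < r^{1−λ}, and t := |α|/r^{1−λ} ∈ (0,1): the expression −λ²(t^{2+2/λ}−1) + 2λ(1−λ)(λ²t^{2+2/λ}+1)log r − 2(1−λ)log t, which up to the positive factor |α|^{−2/λ}r^{2/λ}/(λ²r³) equals dI_b/dr, is strictly positive; hence I_b is strictly increasing in r on (0, e^{1/(2λ(1−λ))}) for such α. -/

import Mathlib

open Real

private lemma E_pos' (lam r t : ℝ) (hlam1 : lam < 0) (hr0 : 0 < r)
    (hr : r < Real.exp (1 / (2 * lam * (1 - lam)))) (ht0 : 0 < t) (ht1 : t < 1) :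
    0 < -(lam ^ 2) * (t ^ ((2:ℝ) + 2 / lam) - 1)
        + 2 * lam * (1 - lam) * (lam ^ 2 * t ^ ((2:ℝ) + 2 / lam) + 1) * Real.log r
        - 2 * (1 - lam) * Real.log t := by
  set T := t ^ ((2:ℝ) + 2 / lam) with hTdef
  have hT0 : 0 < T := Real.rpow_pos_of_pos ht0 _
  have hlogt : Real.log t < 0 := Real.log_neg ht0 ht1
  have hc : 2 * lam * (1 - lam) < 0 := by nlinarith
  have hlogr : Real.log r < 1 / (2 * lam * (1 - lam)) := (Real.log_lt_iff_lt_exp hr0).mpr hr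
  have hkey : 1 < 2 * lam * (1 - lam) * Real.log r := by
    have h := mul_lt_mul_of_neg_left hlogr hc
    rwa [mul_one_div_cancel hc.ne] at h
  have hpos : 0 < lam ^ 2 * T + 1 := by positivity
  nlinarith [mul_lt_mul_of_pos_left hkey hpos,
    mul_pos (by linarith : (0:ℝ) < 2 * (1 - lam)) (neg_pos.mpr hlogt)]

private lemma PT_eq' (lam A s : ℝ) (hlam : lam < 0) (hA : 0 < A) (hs : 0 < s) :
    A ^ 2 * s ^ (2 * lam - 3) =
      A ^ (-(2 : ℝ) / lam) * s ^ (2 / lam - 3) * (A / s ^ ((1:ℝ) - lam)) ^ ((2:ℝ) + 2 / lam) := by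
  have hlam0 : lam ≠ 0 := hlam.ne
  have h2 : s ^ (2 / lam - 3) / s ^ ((1 - lam) * (2 + 2 / lam)) = s ^ (2 * lam - 3) := by
    rw [← Real.rpow_sub hs]; congr 1; field_simp; ring
  have h3 : A ^ (-(2:ℝ) / lam) * A ^ ((2:ℝ) + 2 / lam) = A ^ 2 := by
    rw [← Real.rpow_add hA, ← Real.rpow_natCast A 2]; congr 1; push_cast; field_simp; ring
  rw [Real.div_rpow hA.le (Real.rpow_nonneg hs.le _), ← Real.rpow_mul hs.le]
  rw [← h2, ← h3]; ring

private lemma Ib_hasDeriv' (lam A : ℝ) (hlam : lam < 0) (s : ℝ) (hs : 0 < s) :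
    HasDerivAt (fun s : ℝ =>
      (1 / 2) *
        (-(A ^ (-(2 : ℝ) / lam) * s ^ (2 / lam - 2) *
            (lam + 2 * Real.log A - 2 * Real.log s)) / lam
          + A ^ 2 * s ^ (2 * lam - 2) * (1 - 2 * lam * Real.log s)
          - 2 * Real.log A))
      (A ^ (-(2 : ℝ) / lam) * s ^ (2 / lam - 3) *
          ((lam ^ 2 - 2 * (1 - lam) * Real.log A + 2 * (1 - lam) * Real.log s) / lam ^ 2)
        + A ^ 2 * s ^ (2 * lam - 3) * (2 * lam * (1 - lam) * Real.log s - 1)) s := by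
  have hlam0 : lam ≠ 0 := hlam.ne
  have hlog : HasDerivAt Real.log s⁻¹ s := Real.hasDerivAt_log hs.ne'
  have h1 : HasDerivAt (fun x : ℝ => x ^ (2 / lam - 2))
      ((2 / lam - 2) * s ^ (2 / lam - 2 - 1)) s :=
    Real.hasDerivAt_rpow_const (Or.inl hs.ne')
  have h2 : HasDerivAt (fun x : ℝ => x ^ (2 * lam - 2))
      ((2 * lam - 2) * s ^ (2 * lam - 2 - 1)) s :=
    Real.hasDerivAt_rpow_const (Or.inl hs.ne')
  have hg1 : HasDerivAt (fun x : ℝ => x ^ (2 / lam - 2) * (lam + 2 * Real.log A - 2 * Real.log x))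
      ((2 / lam - 2) * s ^ (2 / lam - 2 - 1) * (lam + 2 * Real.log A - 2 * Real.log s)
        + s ^ (2 / lam - 2) * (0 - 2 * s⁻¹)) s :=
    h1.mul ((hasDerivAt_const s (lam + 2 * Real.log A)).sub (hlog.const_mul 2))
  have hg2 : HasDerivAt (fun x : ℝ => x ^ (2 * lam - 2) * (1 - 2 * lam * Real.log x))
      ((2 * lam - 2) * s ^ (2 * lam - 2 - 1) * (1 - 2 * lam * Real.log s)
        + s ^ (2 * lam - 2) * (0 - 2 * lam * s⁻¹)) s :=
    h2.mul ((hasDerivAt_const s 1).sub (hlog.const_mul (2 * lam)))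
  have hfull := ((((hg1.const_mul (A ^ (-(2 : ℝ) / lam))).neg.div_const lam).add
      (hg2.const_mul (A ^ 2))).sub_const (2 * Real.log A)).const_mul (1 / 2 : ℝ)
  convert hfull using 1
  · rfl
  · rfl
  · funext x; simp only [Pi.add_apply, Pi.neg_apply]; ring
  · have e1 : s ^ (2 / lam - 2 - 1) = s ^ (2 / lam - 3) := by congr 1; ring
    have e2 : s ^ (2 * lam - 2 - 1) = s ^ (2 * lam - 3) := by congr 1; ring
    have e5 : s ^ (2 / lam - 2) = s ^ (2 / lam - 3) * s := by
      rw [← Real.rpow_add_one hs.ne']; congr 1; ring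
    have e6 : s ^ (2 * lam - 2) = s ^ (2 * lam - 3) * s := by
      rw [← Real.rpow_add_one hs.ne']; congr 1; ring
    rw [e1, e2, e5, e6]
    field_simp
    ring

private lemma D_pos' (lam A s : ℝ) (hlam1 : lam < 0) (hA : 0 < A) (hs : 0 < s)
    (hse : s < Real.exp (1 / (2 * lam * (1 - lam)))) (hAs : A < s ^ ((1:ℝ) - lam)) :
    0 < A ^ (-(2 : ℝ) / lam) * s ^ (2 / lam - 3) *
          ((lam ^ 2 - 2 * (1 - lam) * Real.log A + 2 * (1 - lam) * Real.log s) / lam ^ 2)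
        + A ^ 2 * s ^ (2 * lam - 3) * (2 * lam * (1 - lam) * Real.log s - 1) := by
  have hlam0 : lam ≠ 0 := hlam1.ne
  have hsl : 0 < s ^ ((1:ℝ) - lam) := Real.rpow_pos_of_pos hs _
  set t : ℝ := A / s ^ ((1:ℝ) - lam) with htdef
  have ht0 : 0 < t := div_pos hA hsl
  have ht1 : t < 1 := (div_lt_one hsl).mpr hAs
  have hE := E_pos' lam s t hlam1 hs hse ht0 ht1
  have hPT := PT_eq' lam A s hlam1 hA hs
  have hlogt : Real.log t = Real.log A - (1 - lam) * Real.log s := by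
    rw [htdef, Real.log_div hA.ne' hsl.ne', Real.log_rpow hs]
  rw [hlogt] at hE
  have hP : 0 < A ^ (-(2 : ℝ) / lam) * s ^ (2 / lam - 3) := by positivity
  have hl2 : (0:ℝ) < lam ^ 2 := by positivity
  have hD : A ^ (-(2 : ℝ) / lam) * s ^ (2 / lam - 3) *
          ((lam ^ 2 - 2 * (1 - lam) * Real.log A + 2 * (1 - lam) * Real.log s) / lam ^ 2)
        + A ^ 2 * s ^ (2 * lam - 3) * (2 * lam * (1 - lam) * Real.log s - 1)
      = (A ^ (-(2 : ℝ) / lam) * s ^ (2 / lam - 3) / lam ^ 2) *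
          (-(lam ^ 2) * (t ^ ((2:ℝ) + 2 / lam) - 1)
            + 2 * lam * (1 - lam) * (lam ^ 2 * t ^ ((2:ℝ) + 2 / lam) + 1) * Real.log s
            - 2 * (1 - lam) * (Real.log A - (1 - lam) * Real.log s)) := by
    rw [hPT]; field_simp; ring
  rw [hD]
  exact mul_pos (div_pos hP hl2) hE

theorem Ib_deriv_pos
    (lam : ℝ) (hlam0 : -1 ≤ lam) (hlam1 : lam < 0)
    (α : ℂ) (hα0 : 0 < ‖α‖) :
    let A : ℝ := ‖α‖
    let Ib : ℝ → ℝ := fun s =>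
      (1 / 2) *
        (-(A ^ (-(2 : ℝ) / lam) * s ^ (2 / lam - 2) *
            (lam + 2 * Real.log A - 2 * Real.log s)) / lam
          + A ^ 2 * s ^ (2 * lam - 2) * (1 - 2 * lam * Real.log s)
          - 2 * Real.log A)
    (∀ r : ℝ, 0 < r → r < Real.exp (1 / (2 * lam * (1 - lam))) →
      A < r ^ ((1 : ℝ) - lam) →
      let t : ℝ := A / r ^ ((1 : ℝ) - lam)
      0 < -(lam ^ 2) * (t ^ (2 + 2 / lam) - 1)
          + 2 * lam * (1 - lam) * (lam ^ 2 * t ^ (2 + 2 / lam) + 1) * Real.log r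
          - 2 * (1 - lam) * Real.log t) ∧
    (∀ r₁ r₂ : ℝ, 0 < r₁ → r₁ < r₂ → r₂ < Real.exp (1 / (2 * lam * (1 - lam))) →
      A < r₁ ^ ((1 : ℝ) - lam) → Ib r₁ < Ib r₂) := by
  intro A Ib
  have hA : 0 < A := hα0
  constructor
  · intro r hr0 hre hAr t
    exact E_pos' lam r t hlam1 hr0 hre
      (div_pos hA (Real.rpow_pos_of_pos hr0 _))
      ((div_lt_one (Real.rpow_pos_of_pos hr0 _)).mpr hAr)
  · intro r₁ r₂ h1 h12 h2e hA1
    have hmono : StrictMonoOn Ib (Set.Icc r₁ r₂) := by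
      apply strictMonoOn_of_deriv_pos (convex_Icc r₁ r₂)
      · intro s hs
        have hs0 : 0 < s := lt_of_lt_of_le h1 hs.1
        exact (Ib_hasDeriv' lam A hlam1 s hs0).continuousAt.continuousWithinAt
      · intro s hs
        rw [interior_Icc] at hs
        have hs0 : 0 < s := h1.trans hs.1
        have hse : s < Real.exp (1 / (2 * lam * (1 - lam))) := hs.2.trans h2e
        have hAs : A < s ^ ((1:ℝ) - lam) :=
          hA1.trans_le (Real.rpow_le_rpow h1.le hs.1.le (by linarith))
        rw [(Ib_hasDeriv' lam A hlam1 s hs0).deriv]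
        exact D_pos' lam A s hlam1 hA hs0 hse hAs
    exact hmono (Set.left_mem_Icc.mpr h12.le) (Set.right_mem_Icc.mpr h12.le) h12
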